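/- Let b ≥ 2 be an integer and let X be a base-b Benford random variable. Then for every real a > 0, the random variable aX is also base-b Benford. -/
import Mathlib

open MeasureTheory

lemma Ico_disj (x y z : ℝ) : Disjoint (Set.Ico x y) (Set.Ico y z) := by
  apply Set.disjoint_left.2
  rintro t ⟨_, h2⟩ ⟨h3, _⟩
  exact absurd h3 (not_le.2 h2)

lemma map_fract_add_uniform (d : ℝ) (hd0 : 0 ≤ d) (hd1 : d < 1) :
    Measure.map (fun t => Int.fract (d + t)) (volume.restrict (Set.Ico (0 : ℝ) 1))
      = volume.restrict (Set.Ico (0 : ℝ) 1) := by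
  have hmeas : Measurable fun t : ℝ => Int.fract (d + t) :=
    (measurable_const_add d).fract
  have hsplit : Set.Ico (0 : ℝ) 1 = Set.Ico 0 (1 - d) ∪ Set.Ico (1 - d) 1 :=
    (Set.Ico_union_Ico_eq_Ico (by linarith) (by linarith)).symm
  have p1 : Measure.map (fun t => Int.fract (d + t)) (volume.restrict (Set.Ico (0:ℝ) (1 - d)))
      = volume.restrict (Set.Ico d 1) := by
    have hae1 : (fun t => Int.fract (d + t)) =ᵐ[volume.restrict (Set.Ico (0:ℝ) (1 - d))]
        fun t => d + t := by
      filter_upwards [ae_restrict_mem measurableSet_Ico] with t ht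
      exact Int.fract_eq_self.2 ⟨by linarith [ht.1], by linarith [ht.2]⟩
    rw [Measure.map_congr hae1]
    have hpre : (fun t : ℝ => d + t) ⁻¹' Set.Ico d 1 = Set.Ico 0 (1 - d) := by
      ext t
      simp only [Set.mem_preimage, Set.mem_Ico]
      constructor <;> rintro ⟨h1, h2⟩ <;> constructor <;> linarith
    rw [← hpre, ← Measure.restrict_map (measurable_const_add d) measurableSet_Ico,
      map_add_left_eq_self volume d]
  have p2 : Measure.map (fun t => Int.fract (d + t)) (volume.restrict (Set.Ico (1 - d) 1))
      = volume.restrict (Set.Ico 0 d) := by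
    have hae2 : (fun t => Int.fract (d + t)) =ᵐ[volume.restrict (Set.Ico (1 - d) 1)]
        fun t => t + (d - 1) := by
      filter_upwards [ae_restrict_mem measurableSet_Ico] with t ht
      have h : Int.fract (d + t) = Int.fract (d + t + ((-1 : ℤ) : ℝ)) :=
        (Int.fract_add_intCast _ _).symm
      rw [h, Int.fract_eq_self.2 ⟨by push_cast; linarith [ht.1], by push_cast; linarith [ht.2]⟩]
      push_cast; ring
    rw [Measure.map_congr hae2]
    have hpre : (fun t : ℝ => t + (d - 1)) ⁻¹' Set.Ico 0 d = Set.Ico (1 - d) 1 := by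
      ext t
      simp only [Set.mem_preimage, Set.mem_Ico]
      constructor <;> rintro ⟨h1, h2⟩ <;> constructor <;> linarith
    rw [← hpre, ← Measure.restrict_map (measurable_add_const (d - 1)) measurableSet_Ico,
      map_add_right_eq_self volume (d - 1)]
  conv_lhs => rw [hsplit]
  rw [Measure.restrict_union (Ico_disj 0 (1 - d) 1) measurableSet_Ico,
    Measure.map_add _ _ hmeas, p1, p2, add_comm,
    ← Measure.restrict_union (Ico_disj 0 d 1) measurableSet_Ico,
    Set.Ico_union_Ico_eq_Ico hd0 hd1.le]

/-- Scale invariance: if `X` is base-`b` Benford and `a > 0`, then `aX` is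
also base-`b` Benford. -/
theorem benford_smul
    {Ω : Type*} [MeasurableSpace Ω] (ℙ : Measure Ω) [IsProbabilityMeasure ℙ]
    (b : ℕ) (hb : 2 ≤ b) (X : Ω → ℝ) (hX : Measurable X)
    (hpos : ℙ {ω | 0 < X ω} = 1)
    (hben : Measure.map (fun ω => Int.fract (Real.logb b (X ω))) ℙ
      = volume.restrict (Set.Ico (0 : ℝ) 1)) :
    ∀ a : ℝ, 0 < a →
      ℙ {ω | 0 < a * X ω} = 1 ∧
      Measure.map (fun ω => Int.fract (Real.logb b (a * X ω))) ℙ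
        = volume.restrict (Set.Ico (0 : ℝ) 1) := by
  intro a ha
  have hset : {ω | 0 < a * X ω} = {ω | 0 < X ω} := by
    ext ω; simp only [Set.mem_setOf_eq]
    constructor
    · intro h
      by_contra hn
      push_neg at hn
      nlinarith
    · intro h; exact mul_pos ha h
  refine ⟨hset ▸ hpos, ?_⟩
  have hXpos : ∀ᵐ ω ∂ℙ, 0 < X ω := by
    rw [ae_iff]
    have hms : MeasurableSet {ω | 0 < X ω} := hX measurableSet_Ioi
    have := prob_compl_eq_zero_iff hms |>.2 hpos
    simpa [Set.compl_setOf] using this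
  set c : ℝ := Real.logb b a with hc
  have hF : Measurable fun ω => Int.fract (Real.logb b (X ω)) :=
    ((Real.measurable_log.comp hX).div_const _).fract
  have hg : Measurable fun u : ℝ => Int.fract (Int.fract c + u) :=
    (measurable_const_add _).fract
  have hae : (fun ω => Int.fract (Real.logb b (a * X ω)))
      =ᵐ[ℙ] (fun u => Int.fract (Int.fract c + u)) ∘
        (fun ω => Int.fract (Real.logb b (X ω))) := by
    filter_upwards [hXpos] with ω hω
    simp only [Function.comp_apply]
    rw [Real.logb_mul (ne_of_gt ha) (ne_of_gt hω)]
    set s := Real.logb b (X ω) with hs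
    have e1 : c + s = (Int.fract c + Int.fract s) + ((⌊c⌋ + ⌊s⌋ : ℤ) : ℝ) := by
      have h1 := Int.fract_add_floor c
      have h2 := Int.fract_add_floor s
      push_cast
      linarith
    rw [e1, Int.fract_add_intCast]
  rw [Measure.map_congr hae, ← Measure.map_map hg hF, hben]
  exact map_fract_add_uniform _ (Int.fract_nonneg c) (Int.fract_lt_one c)
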